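/- The subgroup 𝔎 is a normal subgroup of Sp(2g,ℤ). -/

import Mathlib

open Matrix

/-- The standard symplectic form matrix `J = [[0, I], [-I, 0]]`. -/
def Jmat (g : ℕ) (R : Type*) [CommRing R] :
    Matrix (Fin g ⊕ Fin g) (Fin g ⊕ Fin g) R :=
  Matrix.fromBlocks 0 1 (-1) 0

/-- The set of integral symplectic matrices, `Sp(2g, ℤ)`. -/
def SpSet (g : ℕ) : Set (Matrix (Fin g ⊕ Fin g) (Fin g ⊕ Fin g) ℤ) :=
  {X | Xᵀ * Jmat g ℤ * X = Jmat g ℤ}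

/-- The subset `𝔎` of `Sp(2g, ℤ)`: symplectic matrices of the form
`[[I+2a, 2b], [2c, I+2d]]` with `Diag b` and `Diag c` even and `Tr a` even. -/
def KSet (g : ℕ) : Set (Matrix (Fin g ⊕ Fin g) (Fin g ⊕ Fin g) ℤ) :=
  {X | X ∈ SpSet g ∧ ∃ a b c d : Matrix (Fin g) (Fin g) ℤ,
    X = Matrix.fromBlocks (1 + 2 • a) (2 • b) (2 • c) (1 + 2 • d) ∧
    (∀ i, (2:ℤ) ∣ b i i) ∧ (∀ i, (2:ℤ) ∣ c i i) ∧ (2:ℤ) ∣ Matrix.trace a}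

/-- The principal congruence subgroup `Γ(2g, N)`: symplectic integral matrices
congruent to the identity modulo `N`. -/
def GammaSet (g : ℕ) (N : ℤ) : Set (Matrix (Fin g ⊕ Fin g) (Fin g ⊕ Fin g) ℤ) :=
  {X | X ∈ SpSet g ∧ ∀ i j, N ∣ (X i j - (1 : Matrix (Fin g ⊕ Fin g) (Fin g ⊕ Fin g) ℤ) i j)}

namespace Stmt4Aux

variable {g : ℕ}

/-- entrywise reduction mod 2 -/
noncomputable def φ (g : ℕ) :
    Matrix (Fin g ⊕ Fin g) (Fin g ⊕ Fin g) ℤ →+* Matrix (Fin g ⊕ Fin g) (Fin g ⊕ Fin g) (ZMod 2) :=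
  (Int.castRingHom (ZMod 2)).mapMatrix

lemma φ_apply (A : Matrix (Fin g ⊕ Fin g) (Fin g ⊕ Fin g) ℤ) (x y) :
    φ g A x y = ((A x y : ℤ) : ZMod 2) := rfl

lemma φ_transpose (A : Matrix (Fin g ⊕ Fin g) (Fin g ⊕ Fin g) ℤ) :
    φ g Aᵀ = (φ g A)ᵀ := rfl

/-- the swap matrix over ZMod 2 -/
def σm (g : ℕ) : Matrix (Fin g ⊕ Fin g) (Fin g ⊕ Fin g) (ZMod 2) :=
  Matrix.fromBlocks 0 1 1 0

lemma φ_J : φ g (Jmat g ℤ) = σm g := by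
  ext (x|x) (y|y) <;>
    simp [φ_apply, σm, Jmat, Matrix.one_apply, apply_ite (Int.cast : ℤ → ZMod 2)] <;>
    try rfl

lemma σ_mul_σ : σm g * σm g = 1 := by
  simp [σm, Matrix.fromBlocks_multiply, ← Matrix.fromBlocks_one]

lemma σ_transpose : (σm g)ᵀ = σm g := by
  simp [σm, Matrix.fromBlocks_transpose]

lemma mul_σ_inl (A : Matrix (Fin g ⊕ Fin g) (Fin g ⊕ Fin g) (ZMod 2)) (x) (j) :
    (A * σm g) x (Sum.inl j) = A x (Sum.inr j) := by
  simp [Matrix.mul_apply, σm, Fintype.sum_sum_type, Matrix.one_apply, mul_ite]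

lemma mul_σ_inr (A : Matrix (Fin g ⊕ Fin g) (Fin g ⊕ Fin g) (ZMod 2)) (x) (j) :
    (A * σm g) x (Sum.inr j) = A x (Sum.inl j) := by
  simp [Matrix.mul_apply, σm, Fintype.sum_sum_type, Matrix.one_apply, mul_ite]

lemma trace_mul_σ (A : Matrix (Fin g ⊕ Fin g) (Fin g ⊕ Fin g) (ZMod 2)) :
    (A * σm g).trace = (∑ i, A (Sum.inl i) (Sum.inr i)) + ∑ i, A (Sum.inr i) (Sum.inl i) := by
  rw [Matrix.trace]
  simp only [Matrix.diag]
  rw [Fintype.sum_sum_type]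
  simp [mul_σ_inl, mul_σ_inr]

lemma dvd_iff_cast (v : ℤ) : (2:ℤ) ∣ v ↔ ((v : ZMod 2) = 0) := by
  rw [ZMod.intCast_zmod_eq_zero_iff_dvd]; norm_num

lemma add_self (Z : Matrix (Fin g ⊕ Fin g) (Fin g ⊕ Fin g) (ZMod 2)) : Z + Z = 0 := by
  ext i j; simpa [Matrix.add_apply] using CharTwo.add_self_eq_zero (Z i j)

lemma neg_self (Z : Matrix (Fin g ⊕ Fin g) (Fin g ⊕ Fin g) (ZMod 2)) : -Z = Z := by
  ext i j; simp [CharTwo.neg_eq]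

lemma smul_fromBlocks4 (w x y z : Matrix (Fin g) (Fin g) ℤ) :
    (2:ℕ) • Matrix.fromBlocks w x y z = Matrix.fromBlocks (2•w) (2•x) (2•y) (2•z) := by
  simp [two_smul, Matrix.fromBlocks_add]

lemma blocks_form (W : Matrix (Fin g ⊕ Fin g) (Fin g ⊕ Fin g) ℤ) :
    Matrix.fromBlocks ((1 : Matrix (Fin g) (Fin g) ℤ) + 2 • W.toBlocks₁₁) (2 • W.toBlocks₁₂)
      (2 • W.toBlocks₂₁) ((1 : Matrix (Fin g) (Fin g) ℤ) + 2 • W.toBlocks₂₂) = 1 + 2 • W := by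
  conv_rhs => rw [← Matrix.fromBlocks_toBlocks W]
  rw [smul_fromBlocks4, ← Matrix.fromBlocks_one, Matrix.fromBlocks_add, zero_add, zero_add]

end Stmt4Aux

open Stmt4Aux in
/-- `𝔎` is a normal subgroup of `Sp(2g, ℤ)`: it is closed under conjugation by
any symplectic matrix. -/
theorem stmt4 (g : ℕ) (hg : 1 ≤ g)
    (P Q : Matrix (Fin g ⊕ Fin g) (Fin g ⊕ Fin g) ℤ)
    (hP : P ∈ SpSet g) (hPQ : P * Q = 1) (hQP : Q * P = 1) :
    ∀ X ∈ KSet g, P * X * Q ∈ KSet g := by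
  intro X hX
  obtain ⟨hXsp, a, b, c, d, hXeq, hb, hc, ha⟩ := hX
  replace hXsp : Xᵀ * Jmat g ℤ * X = Jmat g ℤ := hXsp
  set N : Matrix (Fin g ⊕ Fin g) (Fin g ⊕ Fin g) ℤ := Matrix.fromBlocks a b c d with hN
  have hX2 : X = 1 + 2 • N := by
    rw [hXeq, hN, smul_fromBlocks4, ← Matrix.fromBlocks_one, Matrix.fromBlocks_add,
      zero_add, zero_add]
  set M' : Matrix (Fin g ⊕ Fin g) (Fin g ⊕ Fin g) ℤ := P * N * Q with hM'
  have hPXQ : P * X * Q = 1 + 2 • M' := by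
    rw [hX2, mul_add, add_mul, mul_one, hPQ, hM']
    rw [Matrix.mul_smul, Matrix.smul_mul]
  -- symplectic membership
  have hQsp : Qᵀ * Jmat g ℤ * Q = Jmat g ℤ := by
    have h1 : Qᵀ * (Pᵀ * Jmat g ℤ * P) * Q = Jmat g ℤ := by
      have h2 : Qᵀ * (Pᵀ * Jmat g ℤ * P) * Q = (P*Q)ᵀ * Jmat g ℤ * (P*Q) := by
        simp [Matrix.transpose_mul, Matrix.mul_assoc]
      rw [h2, hPQ]; simp
    rwa [hP] at h1
  have hsp' : P * X * Q ∈ SpSet g := by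
    show (P*X*Q)ᵀ * Jmat g ℤ * (P*X*Q) = Jmat g ℤ
    calc (P*X*Q)ᵀ * Jmat g ℤ * (P*X*Q)
        = Qᵀ * (Xᵀ * (Pᵀ * Jmat g ℤ * P) * X) * Q := by
          simp [Matrix.transpose_mul, Matrix.mul_assoc]
      _ = Qᵀ * (Xᵀ * Jmat g ℤ * X) * Q := by rw [hP]
      _ = Qᵀ * Jmat g ℤ * Q := by rw [hXsp]
      _ = Jmat g ℤ := hQsp
  -- integer relation
  have hrelZ : Nᵀ * Jmat g ℤ + Jmat g ℤ * N + 2 • (Nᵀ * Jmat g ℤ * N) = 0 := by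
    have h := hXsp
    rw [hX2] at h
    have expand : (1 + 2•N)ᵀ * Jmat g ℤ * (1 + 2•N)
        = Jmat g ℤ + 2 • (Nᵀ * Jmat g ℤ + Jmat g ℤ * N + 2 • (Nᵀ * Jmat g ℤ * N)) := by
      simp only [Matrix.transpose_add, Matrix.transpose_one, Matrix.transpose_smul,
        add_mul, mul_add, one_mul, mul_one, smul_add, Matrix.smul_mul, Matrix.mul_smul,
        smul_smul]
      abel
    rw [expand] at h
    have h2 : (2:ℕ) • (Nᵀ * Jmat g ℤ + Jmat g ℤ * N + 2 • (Nᵀ * Jmat g ℤ * N)) = 0 :=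
      add_eq_left.mp h
    ext i j
    have h3 := congrFun (congrFun h2 i) j
    simp only [Matrix.smul_apply, Matrix.add_apply, Matrix.zero_apply, nsmul_eq_mul,
      Nat.cast_ofNat] at h3 ⊢
    linarith
  -- pass to ZMod 2
  set p := φ g P with hp
  set q := φ g Q with hq
  set m := φ g N with hm
  have hpq2 : p * q = 1 := by rw [hp, hq, ← _root_.map_mul, hPQ, _root_.map_one]
  have hpsp : pᵀ * σm g * p = σm g := by
    have := congrArg (φ g) hP
    rw [_root_.map_mul, _root_.map_mul, φ_transpose, φ_J] at this
    exact this
  have hrel2 : mᵀ * σm g + σm g * m = 0 := by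
    have := congrArg (φ g) hrelZ
    rw [_root_.map_add, _root_.map_add, _root_.map_mul, _root_.map_mul, φ_transpose, φ_J, _root_.map_zero] at this
    have hz : φ g (2 • (Nᵀ * Jmat g ℤ * N)) = 0 := by
      rw [_root_.map_nsmul]; rw [two_smul]; exact add_self _
    rw [hz, add_zero] at this
    exact this
  have hrel3 : mᵀ * σm g = σm g * m := by
    have := hrel2
    rw [add_eq_zero_iff_eq_neg, neg_self] at this
    exact this
  set s := m * σm g with hs
  have hs_symm : sᵀ = s := by
    rw [hs, Matrix.transpose_mul, σ_transpose]
    calc (σm g) * mᵀ = (σm g) * (mᵀ * σm g) * σm g := by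
          rw [Matrix.mul_assoc, Matrix.mul_assoc, σ_mul_σ, mul_one]
      _ = (σm g) * (σm g * m) * σm g := by rw [hrel3]
      _ = m * σm g := by
          rw [← Matrix.mul_assoc, σ_mul_σ, one_mul]
  have hsymm' : ∀ x y, s y x = s x y := by
    intro x y
    conv_lhs => rw [← hs_symm]
    rfl
  have hq_eq : q = σm g * pᵀ * σm g := by
    have h1 : pᵀ * σm g = σm g * q := by
      calc pᵀ * σm g = pᵀ * σm g * (p * q) := by rw [hpq2, mul_one]
        _ = (pᵀ * σm g * p) * q := by simp [Matrix.mul_assoc]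
        _ = σm g * q := by rw [hpsp]
    calc q = (σm g * σm g) * q := by rw [σ_mul_σ, one_mul]
      _ = σm g * (pᵀ * σm g) := by rw [Matrix.mul_assoc, h1]
      _ = σm g * pᵀ * σm g := by rw [Matrix.mul_assoc]
  -- entries of s
  have hs_diag_l : ∀ i, s (Sum.inl i) (Sum.inl i) = 0 := by
    intro i
    rw [hs, mul_σ_inl, hm, φ_apply, hN, Matrix.fromBlocks_apply₁₂]
    exact (dvd_iff_cast _).mp (hb i)
  have hs_diag_r : ∀ i, s (Sum.inr i) (Sum.inr i) = 0 := by
    intro i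
    rw [hs, mul_σ_inr, hm, φ_apply, hN, Matrix.fromBlocks_apply₂₁]
    exact (dvd_iff_cast _).mp (hc i)
  have hs_ell : ∑ i, s (Sum.inl i) (Sum.inr i) = 0 := by
    have : ∑ i, s (Sum.inl i) (Sum.inr i) = ((Matrix.trace a : ℤ) : ZMod 2) := by
      rw [Matrix.trace]
      push_cast
      apply Finset.sum_congr rfl
      intro i _
      rw [hs, mul_σ_inr, hm, φ_apply, hN, Matrix.fromBlocks_apply₁₁]
      rfl
    rw [this]
    exact (dvd_iff_cast _).mp ha
  -- the half matrix u
  set u : Matrix (Fin g ⊕ Fin g) (Fin g ⊕ Fin g) (ZMod 2) := Matrix.of (fun x y =>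
    match x, y with
    | Sum.inl i, Sum.inl j => if i < j then s (Sum.inl i) (Sum.inl j) else 0
    | Sum.inl i, Sum.inr j => s (Sum.inl i) (Sum.inr j)
    | Sum.inr _, Sum.inl _ => 0
    | Sum.inr i, Sum.inr j => if i < j then s (Sum.inr i) (Sum.inr j) else 0) with hu
  have huu : u + uᵀ = s := by
    ext x y
    rcases x with x | x <;> rcases y with y | y <;>
      simp only [Matrix.add_apply, Matrix.transpose_apply, hu, Matrix.of_apply]
    · rcases lt_trichotomy x y with h | h | h
      · simp [h, not_lt.mpr h.le, h.ne']
      · subst h; simp [lt_irrefl, hs_diag_l x]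
      · simp [h, not_lt.mpr h.le, h.ne', hsymm' (Sum.inl x) (Sum.inl y)]
    · simp
    · simp [hsymm' (Sum.inr x) (Sum.inl y)]
    · rcases lt_trichotomy x y with h | h | h
      · simp [h, not_lt.mpr h.le, h.ne']
      · subst h; simp [lt_irrefl, hs_diag_r x]
      · simp [h, not_lt.mpr h.le, h.ne', hsymm' (Sum.inr x) (Sum.inr y)]
  -- transformed matrix
  set A : Matrix (Fin g ⊕ Fin g) (Fin g ⊕ Fin g) (ZMod 2) := p * u * pᵀ with hA
  have hS' : φ g M' * σm g = A + Aᵀ := by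
    have h1 : φ g M' = p * m * q := by rw [hM', _root_.map_mul, _root_.map_mul, hp, hq, hm]
    have h2 : q * σm g = σm g * pᵀ := by
      rw [hq_eq, Matrix.mul_assoc, σ_mul_σ, mul_one]
    calc φ g M' * σm g = p * m * (q * σm g) := by rw [h1, Matrix.mul_assoc]
      _ = p * m * (σm g * pᵀ) := by rw [h2]
      _ = p * (m * σm g) * pᵀ := by rw [Matrix.mul_assoc, Matrix.mul_assoc, Matrix.mul_assoc]
      _ = p * (u + uᵀ) * pᵀ := by rw [← hs, ← huu]
      _ = A + Aᵀ := by
          simp [hA, mul_add, add_mul, Matrix.transpose_mul, Matrix.mul_assoc]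
  -- the three divisibility goals, mod 2
  have hdiag_l : ∀ i, φ g M' (Sum.inl i) (Sum.inr i) = 0 := by
    intro i
    have := congrFun (congrFun hS' (Sum.inl i)) (Sum.inl i)
    rw [mul_σ_inl] at this
    rw [this, Matrix.add_apply, Matrix.transpose_apply]
    exact CharTwo.add_self_eq_zero _
  have hdiag_r : ∀ i, φ g M' (Sum.inr i) (Sum.inl i) = 0 := by
    intro i
    have := congrFun (congrFun hS' (Sum.inr i)) (Sum.inr i)
    rw [mul_σ_inr] at this
    rw [this, Matrix.add_apply, Matrix.transpose_apply]
    exact CharTwo.add_self_eq_zero _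
  have htr : ∑ i, φ g M' (Sum.inl i) (Sum.inl i) = 0 := by
    have h1 : ∀ i, φ g M' (Sum.inl i) (Sum.inl i)
        = (A + Aᵀ) (Sum.inl i) (Sum.inr i) := by
      intro i
      rw [← hS', mul_σ_inr]
    calc ∑ i, φ g M' (Sum.inl i) (Sum.inl i)
        = ∑ i, ((A (Sum.inl i) (Sum.inr i)) + A (Sum.inr i) (Sum.inl i)) := by
          apply Finset.sum_congr rfl
          intro i _
          rw [h1 i, Matrix.add_apply, Matrix.transpose_apply]
      _ = (∑ i, A (Sum.inl i) (Sum.inr i)) + ∑ i, A (Sum.inr i) (Sum.inl i) := by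
          rw [Finset.sum_add_distrib]
      _ = (A * σm g).trace := (trace_mul_σ A).symm
      _ = (u * σm g).trace := by
          have e1 : A * σm g = p * u * (pᵀ * σm g) := by rw [hA, Matrix.mul_assoc]
          rw [e1, Matrix.trace_mul_cycle p u (pᵀ * σm g), hpsp, Matrix.trace_mul_comm]
      _ = 0 := by
          rw [trace_mul_σ]
          have h2 : ∀ i, u (Sum.inr i) (Sum.inl i) = 0 := fun i => rfl
          have h3 : ∀ i, u (Sum.inl i) (Sum.inr i) = s (Sum.inl i) (Sum.inr i) :=
            fun i => rfl
          simp only [h2, h3, Finset.sum_const_zero, add_zero]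
          exact hs_ell
  -- assemble
  refine ⟨hsp', M'.toBlocks₁₁, M'.toBlocks₁₂, M'.toBlocks₂₁, M'.toBlocks₂₂, ?_, ?_, ?_, ?_⟩
  · rw [hPXQ]
    exact (blocks_form M').symm
  · intro i
    rw [dvd_iff_cast]
    exact hdiag_l i
  · intro i
    rw [dvd_iff_cast]
    exact hdiag_r i
  · rw [dvd_iff_cast, Matrix.trace]
    push_cast
    rw [← htr]
    rfl
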